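/- The general weighted SRD scheme is conservative: if U_i^n = Σ_{j∈W_i} w_{i,j} Q̂_j^{n−1} with Σ_{j∈W_i} w_{i,j} = 1 for every cell i, and Q̂_j^{n−1} = (1/V̂_j) Σ_{i∈M_j} w_{i,j} V_i Û_i^{n−1} with V̂_j = Σ_{i∈M_j} w_{i,j} V_i, where membership i ∈ M_j is equivalent to j ∈ W_i, then Σ_i V_i U_i^n = Σ_i V_i Û_i^{n−1}. -/

import Mathlib

open Finset in
theorem stmt_4 {ι : Type*} [Fintype ι] [DecidableEq ι]
    (V : ι → ℝ) (w : ι → ι → ℝ) (W : ι → Finset ι)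
    (U Uhat Q Vhat : ι → ℝ)
    (hVhat : ∀ j, Vhat j = ∑ i ∈ univ.filter (fun i => j ∈ W i), w i j * V i)
    (hVhatpos : ∀ j, 0 < Vhat j)
    (hQ : ∀ j, Q j = (1 / Vhat j) * ∑ i ∈ univ.filter (fun i => j ∈ W i), w i j * V i * Uhat i)
    (hU : ∀ i, U i = ∑ j ∈ W i, w i j * Q j)
    (hsum : ∀ i, ∑ j ∈ W i, w i j = 1) :
    ∑ i, V i * U i = ∑ i, V i * Uhat i := by
  have key : ∀ i : ι, (W i : Finset ι) = univ.filter (fun j => j ∈ W i) := by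
    intro i; simp
  calc ∑ i, V i * U i
      = ∑ i, ∑ j : ι, (if j ∈ W i then w i j * V i * Q j else 0) := by
        refine Finset.sum_congr rfl fun i _ => ?_
        rw [hU, Finset.mul_sum, Finset.sum_ite_mem, univ_inter]
        refine Finset.sum_congr rfl fun j _ => by ring
    _ = ∑ j : ι, ∑ i : ι, (if j ∈ W i then w i j * V i * Q j else 0) :=
        Finset.sum_comm
    _ = ∑ j : ι, Q j * Vhat j := by
        refine Finset.sum_congr rfl fun j _ => ?_
        rw [hVhat, Finset.mul_sum, Finset.sum_filter]
        refine Finset.sum_congr rfl fun i _ => ?_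
        split <;> ring
    _ = ∑ j : ι, ∑ i : ι, (if j ∈ W i then w i j * V i * Uhat i else 0) := by
        refine Finset.sum_congr rfl fun j _ => ?_
        rw [hQ, Finset.sum_filter]
        field_simp
        rw [mul_div_cancel_left₀ _ (hVhatpos j).ne']
    _ = ∑ i : ι, ∑ j : ι, (if j ∈ W i then w i j * V i * Uhat i else 0) :=
        Finset.sum_comm
    _ = ∑ i, V i * Uhat i := by
        refine Finset.sum_congr rfl fun i _ => ?_
        rw [Finset.sum_ite_mem, univ_inter]
        have : ∑ j ∈ W i, w i j * V i * Uhat i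
            = (∑ j ∈ W i, w i j) * (V i * Uhat i) := by
          rw [Finset.sum_mul]; exact Finset.sum_congr rfl fun j _ => by ring
        rw [this, hsum, one_mul]
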